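/- Let M > 0, α > 0, T > 0 with √α · T < π/2. Suppose v: [0,T] → ℝ is C², v > 0, v(0) = M, v′(0) = 0, and v″(t) + α v(t) > 0 for all t. Then v(t) > M cos(√α · t) for all t ∈ (0, T]. -/

import Mathlib

/-- ODE comparison: if `v > 0` on `[0,T]`, `v(0) = M`, `v′(0) = 0` and
`v″ + α v > 0` on `[0,T]` with `√α · T < π/2`, then `v(t) > M cos(√α t)` on `(0,T]`. -/
theorem ode_comparison (M α T : ℝ) (hM : 0 < M) (hα : 0 < α) (hT : 0 < T)
    (hαT : Real.sqrt α * T < Real.pi / 2)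
    (v v' v'' : ℝ → ℝ)
    (hd1 : ∀ t ∈ Set.Icc (0 : ℝ) T, HasDerivAt v (v' t) t)
    (hd2 : ∀ t ∈ Set.Icc (0 : ℝ) T, HasDerivAt v' (v'' t) t)
    (hc2 : ContinuousOn v'' (Set.Icc (0 : ℝ) T))
    (hpos : ∀ t ∈ Set.Icc (0 : ℝ) T, 0 < v t)
    (hv0 : v 0 = M) (hv'0 : v' 0 = 0)
    (hode : ∀ t ∈ Set.Icc (0 : ℝ) T, 0 < v'' t + α * v t) :
    ∀ t ∈ Set.Ioc (0 : ℝ) T, M * Real.cos (Real.sqrt α * t) < v t := by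
  set s := Real.sqrt α with hs_def
  have hs : 0 < s := Real.sqrt_pos.mpr hα
  have hs2 : s * s = α := Real.mul_self_sqrt hα.le
  -- cos positive on [0,T]
  have hcos : ∀ t ∈ Set.Icc (0 : ℝ) T, 0 < Real.cos (s * t) := by
    intro t ht
    apply Real.cos_pos_of_mem_Ioo
    constructor
    · have : (0:ℝ) ≤ s * t := mul_nonneg hs.le ht.1
      linarith [Real.pi_pos]
    · have : s * t ≤ s * T := mul_le_mul_of_nonneg_left ht.2 hs.le
      linarith
  -- derivative of cos(s t) and sin(s t)
  have hlin : ∀ t : ℝ, HasDerivAt (fun x => s * x) s t := by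
    intro t
    simpa using (hasDerivAt_id t).const_mul s
  have hc : ∀ t : ℝ, HasDerivAt (fun x => Real.cos (s * x)) (-Real.sin (s * t) * s) t :=
    fun t => (Real.hasDerivAt_cos (s * t)).comp t (hlin t)
  have hsin : ∀ t : ℝ, HasDerivAt (fun x => Real.sin (s * x)) (Real.cos (s * t) * s) t :=
    fun t => (Real.hasDerivAt_sin (s * t)).comp t (hlin t)
  -- Wronskian-type function
  set W : ℝ → ℝ := fun t => v' t * Real.cos (s * t) + v t * (Real.sin (s * t) * s) with hW_def
  have hWderiv : ∀ t ∈ Set.Icc (0 : ℝ) T,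
      HasDerivAt W ((v'' t + α * v t) * Real.cos (s * t)) t := by
    intro t ht
    have h1 := (hd2 t ht).mul (hc t)
    have h2 := (hd1 t ht).mul ((hsin t).mul_const s)
    have := h1.add h2
    refine this.congr_deriv (Eq.symm ?_)
    have hsq : Real.cos (s * t) * s * s = α * Real.cos (s * t) := by
      rw [mul_assoc, hs2, mul_comm]
    linear_combination -(v t) * hsq
  have hWcont : ContinuousOn W (Set.Icc (0:ℝ) T) := by
    apply ContinuousOn.add
    · exact ContinuousOn.mul (fun t ht => (hd2 t ht).continuousAt.continuousWithinAt)
        (Continuous.continuousOn (Real.continuous_cos.comp (continuous_const.mul continuous_id)))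
    · exact ContinuousOn.mul (fun t ht => (hd1 t ht).continuousAt.continuousWithinAt)
        (Continuous.continuousOn ((Real.continuous_sin.comp (continuous_const.mul continuous_id)).mul continuous_const))
  have hWmono : StrictMonoOn W (Set.Icc (0:ℝ) T) := by
    apply strictMonoOn_of_deriv_pos (convex_Icc 0 T) hWcont
    intro x hx
    rw [interior_Icc] at hx
    have hx' : x ∈ Set.Icc (0:ℝ) T := ⟨hx.1.le, hx.2.le⟩
    rw [(hWderiv x hx').deriv]
    exact mul_pos (hode x hx') (hcos x hx')
  have hW0 : W 0 = 0 := by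
    simp [hW_def, hv'0]
  have hWpos : ∀ t ∈ Set.Ioc (0:ℝ) T, 0 < W t := by
    intro t ht
    have := hWmono (Set.left_mem_Icc.mpr hT.le) ⟨ht.1.le, ht.2⟩ ht.1
    rwa [hW0] at this
  -- quotient g = v / cos(s t)
  set g : ℝ → ℝ := fun t => v t / Real.cos (s * t) with hg_def
  have hgderiv : ∀ t ∈ Set.Icc (0:ℝ) T,
      HasDerivAt g (W t / (Real.cos (s * t))^2) t := by
    intro t ht
    have := (hd1 t ht).div (hc t) (ne_of_gt (hcos t ht))
    refine this.congr_deriv (Eq.symm ?_)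
    field_simp [hW_def]
    try ring
  have hgcont : ContinuousOn g (Set.Icc (0:ℝ) T) :=
    fun t ht => ((hgderiv t ht).continuousAt).continuousWithinAt
  have hgmono : StrictMonoOn g (Set.Icc (0:ℝ) T) := by
    apply strictMonoOn_of_deriv_pos (convex_Icc 0 T) hgcont
    intro x hx
    rw [interior_Icc] at hx
    have hx' : x ∈ Set.Icc (0:ℝ) T := ⟨hx.1.le, hx.2.le⟩
    rw [(hgderiv x hx').deriv]
    exact div_pos (hWpos x ⟨hx.1, hx.2.le⟩) (pow_pos (hcos x hx') 2)
  have hg0 : g 0 = M := by simp [hg_def, hv0]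
  intro t ht
  have h := hgmono (Set.left_mem_Icc.mpr hT.le) ⟨ht.1.le, ht.2⟩ ht.1
  rw [hg0] at h
  have hct := hcos t ⟨ht.1.le, ht.2⟩
  rw [hg_def] at h
  simp only at h
  calc M * Real.cos (s * t) < v t / Real.cos (s * t) * Real.cos (s * t) := by
        exact mul_lt_mul_of_pos_right h hct
    _ = v t := div_mul_cancel₀ _ (ne_of_gt hct)
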